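/- In the linear case φ₁ = x₁, φ₂ = x₂, h = (x₁+x₂)/2, f = w₁x₁ + w₂x₂ with σ²_{x₁} = σ²_{x₂} = σ²_x, the condition σ²/(σ²_f(n−1)) ≥ R²_{f,x₁x₂} − R²_{f,h} is equivalent to ρ_{x₁,x₂} ≥ 1 − 2σ²/((n−1)(w₁−w₂)²σ²_x), when w₁ ≠ w₂. -/

import Mathlib

set_option maxHeartbeats 1600000 in
/-- Linear case `φ₁ = x₁, φ₂ = x₂, h = (x₁+x₂)/2, f = w₁x₁ + w₂x₂` with equal variances:
the aggregation condition `σ²/(σ²_f(n-1)) ≥ R²_{f,x₁x₂} - R²_{f,h}` is equivalent to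
`ρ_{x₁,x₂} ≥ 1 - 2σ²/((n-1)(w₁-w₂)²σ²_x)`. -/
theorem stmt_11 (n : ℕ) (hn : 2 ≤ n) (σ2 σx2 ρ w1 w2 : ℝ)
    (hσx : 0 < σx2) (hρ : -1 < ρ) (hρ' : ρ < 1) (hw : w1 ≠ w2)
    (c12 c1 c2 sf sh ch ρ1 ρ2 ρfh : ℝ)
    (hc12 : c12 = ρ * σx2)
    (hc1 : c1 = w1 * σx2 + w2 * c12)
    (hc2 : c2 = w2 * σx2 + w1 * c12)
    (hsf : sf = w1 ^ 2 * σx2 + w2 ^ 2 * σx2 + 2 * w1 * w2 * c12)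
    (hsh : sh = (σx2 + σx2 + 2 * c12) / 4)
    (hch : ch = (c1 + c2) / 2)
    (hρ1 : ρ1 = c1 / (Real.sqrt σx2 * Real.sqrt sf))
    (hρ2 : ρ2 = c2 / (Real.sqrt σx2 * Real.sqrt sf))
    (hρfh : ρfh = ch / (Real.sqrt sh * Real.sqrt sf)) :
    (σ2 / (sf * ((n : ℝ) - 1))
        ≥ (ρ1 ^ 2 + ρ2 ^ 2 - 2 * ρ1 * ρ2 * ρ) / (1 - ρ ^ 2) - ρfh ^ 2)
      ↔ ρ ≥ 1 - 2 * σ2 / (((n : ℝ) - 1) * (w1 - w2) ^ 2 * σx2) := by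
  have hw' : w1 - w2 ≠ 0 := sub_ne_zero.mpr hw
  have hw2 : 0 < (w1 - w2) ^ 2 :=
    lt_of_le_of_ne (sq_nonneg _) (Ne.symm (pow_ne_zero 2 hw'))
  have hn1 : (0:ℝ) < (n : ℝ) - 1 := by
    have : (2:ℝ) ≤ (n : ℝ) := by exact_mod_cast hn
    linarith
  have hexpr : 0 < w1 ^ 2 + w2 ^ 2 + 2 * w1 * w2 * ρ := by
    nlinarith [mul_pos (sub_pos.mpr hρ') hw2,
      mul_nonneg (by linarith : (0:ℝ) ≤ 1 + ρ) (sq_nonneg (w1 + w2))]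
  have hsf0 : 0 < sf := by
    rw [hsf, hc12]; nlinarith [mul_pos hσx hexpr]
  have hsh0 : 0 < sh := by
    rw [hsh, hc12]; nlinarith [mul_pos hσx (by linarith : (0:ℝ) < 1 + ρ)]
  have hρ2' : (1 : ℝ) - ρ ^ 2 ≠ 0 := by nlinarith
  have h1 : ρ1 ^ 2 = c1 ^ 2 / (σx2 * sf) := by
    rw [hρ1, div_pow, mul_pow, Real.sq_sqrt hσx.le, Real.sq_sqrt hsf0.le]
  have h2 : ρ2 ^ 2 = c2 ^ 2 / (σx2 * sf) := by
    rw [hρ2, div_pow, mul_pow, Real.sq_sqrt hσx.le, Real.sq_sqrt hsf0.le]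
  have h12 : ρ1 * ρ2 = c1 * c2 / (σx2 * sf) := by
    rw [hρ1, hρ2, div_mul_div_comm, mul_mul_mul_comm,
      Real.mul_self_sqrt hσx.le, Real.mul_self_sqrt hsf0.le]
  have hh : ρfh ^ 2 = ch ^ 2 / (sh * sf) := by
    rw [hρfh, div_pow, mul_pow, Real.sq_sqrt hsh0.le, Real.sq_sqrt hsf0.le]
  have key : (ρ1 ^ 2 + ρ2 ^ 2 - 2 * ρ1 * ρ2 * ρ) / (1 - ρ ^ 2) - ρfh ^ 2
      = σx2 * (1 - ρ) * (w1 - w2) ^ 2 / (2 * sf) := by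
    rw [h1, h2, hh, show (2:ℝ) * ρ1 * ρ2 * ρ = 2 * (ρ1 * ρ2) * ρ by ring, h12]
    have hsfne : sf ≠ 0 := hsf0.ne'
    have hshne : sh ≠ 0 := hsh0.ne'
    have hσxne : σx2 ≠ 0 := hσx.ne'
    subst hch hc1 hc2 hsh hc12
    have hs4 : σx2 + σx2 + 2 * (ρ * σx2) ≠ 0 := by nlinarith
    have hs5 : (1:ℝ) + 1 + ρ * 2 ≠ 0 := by nlinarith
    field_simp [hs4, hs5]
    ring
  rw [key]
  have hD : 0 < ((n : ℝ) - 1) * (w1 - w2) ^ 2 * σx2 :=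
    mul_pos (mul_pos hn1 hw2) hσx
  constructor
  · intro h
    rw [ge_iff_le, div_le_div_iff₀ (by positivity) (mul_pos hsf0 hn1)] at h
    rw [ge_iff_le, sub_le_comm, le_div_iff₀ hD]
    have h2 : ((1 - ρ) * (((n : ℝ) - 1) * (w1 - w2) ^ 2 * σx2)) * sf
        ≤ (2 * σ2) * sf := by nlinarith [h]
    exact le_of_mul_le_mul_right h2 hsf0
  · intro h
    rw [ge_iff_le, sub_le_comm, le_div_iff₀ hD] at h
    rw [ge_iff_le, div_le_div_iff₀ (by positivity) (mul_pos hsf0 hn1)]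
    nlinarith [mul_le_mul_of_nonneg_right h hsf0.le]
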